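/- The vector h₂ is a hole of the semigroup S: h₂ lies in the subgroup of ℤ^I generated by the 16 vectors A(x), the double 2•h₂ lies in S, but h₂ itself does not lie in S. -/

import Mathlib

/-- A state of the graph `K̃₄` is a quadruple `(x₁,x₂,x₃,x₄) ∈ {0,1}⁴`,
encoded as a function `Fin 4 → Fin 2` (index `i` is vertex `i+1`). -/
abbrev K4State := Fin 4 → Fin 2

/-- The index set `I = {0,1}³ ⊕ ({1,2,3} × {0,1}²)`: triangle coordinates and
edge coordinates. -/
abbrev K4Index := (Fin 2 × Fin 2 × Fin 2) ⊕ (Fin 3 × Fin 2 × Fin 2)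

/-- The marginal map of `K̃₄`: `A x` has entry 1 at the triangle coordinate
`(x₁,x₂,x₃)`, entry 1 at the edge coordinate `(i,(x_i,x₄))` for `i ∈ {1,2,3}`,
and entry 0 elsewhere. -/
def A (x : K4State) : K4Index → ℤ
  | Sum.inl (a, b, c) => if x 0 = a ∧ x 1 = b ∧ x 2 = c then 1 else 0
  | Sum.inr (i, a, b) => if x i.castSucc = a ∧ x 3 = b then 1 else 0

/-- The additive submonoid `S` of `ℤ^I` generated by the 16 vectors `A x`. -/
def S : AddSubmonoid (K4Index → ℤ) := AddSubmonoid.closure (Set.range A)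

/-- The fundamental hole `h₁`: triangle coordinate `(a,b,c)` equal to 1 iff
`a ⊕ b ⊕ c = 0`, all twelve edge coordinates equal to 1. -/
def h₁ : K4Index → ℤ
  | Sum.inl (a, b, c) => if a + b + c = 0 then 1 else 0
  | Sum.inr _ => 1

/-- The fundamental hole `h₂`: triangle coordinate `(a,b,c)` equal to 1 iff
`a ⊕ b ⊕ c = 1`, all twelve edge coordinates equal to 1. -/
def h₂ : K4Index → ℤ
  | Sum.inl (a, b, c) => if a + b + c = 1 then 1 else 0
  | Sum.inr _ => 1

/-- `h₂` is a hole of `S`: it lies in the subgroup generated by the vectors `A x`,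
its double lies in `S`, but `h₂` itself does not lie in `S`. -/
def enc : Fin 16 → K4State := ![![0,0,0,0], ![0,0,0,1], ![0,0,1,0], ![0,0,1,1], ![0,1,0,0], ![0,1,0,1], ![0,1,1,0], ![0,1,1,1], ![1,0,0,0], ![1,0,0,1], ![1,0,1,0], ![1,0,1,1], ![1,1,0,0], ![1,1,0,1], ![1,1,1,0], ![1,1,1,1]]

set_option maxHeartbeats 1000000 in
lemma enc_surj : ∀ x : K4State, ∃ i : Fin 16, enc i = x := by decide

lemma mem_S_rep {v : K4Index → ℤ} (hv : v ∈ S) :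
    ∃ n : Fin 16 → ℕ, v = ∑ i : Fin 16, (n i : ℤ) • A (enc i) := by
  induction hv using AddSubmonoid.closure_induction with
  | mem w hw =>
    obtain ⟨x, rfl⟩ := hw
    obtain ⟨i, rfl⟩ := enc_surj x
    refine ⟨fun j => if j = i then 1 else 0, ?_⟩
    rw [Finset.sum_eq_single i] <;> simp +contextual
  | zero => exact ⟨0, by simp⟩
  | add a b _ _ ha hb =>
    obtain ⟨n, rfl⟩ := ha; obtain ⟨m, rfl⟩ := hb
    exact ⟨n + m, by simp [← Finset.sum_add_distrib, add_smul]⟩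

lemma cs0 : ((0:Fin 3).castSucc : Fin 4) = 0 := rfl
lemma cs1 : ((1:Fin 3).castSucc : Fin 4) = 1 := rfl
lemma cs2 : ((2:Fin 3).castSucc : Fin 4) = 2 := rfl

set_option maxHeartbeats 1000000 in
lemma h₂_not_mem_S : h₂ ∉ S := by
  intro hS
  obtain ⟨n, hn⟩ := mem_S_rep hS
  have key : ∀ idx : K4Index, h₂ idx = ∑ i : Fin 16, (n i : ℤ) * A (enc i) idx := by
    intro idx
    rw [hn]; simp [Finset.sum_apply]
  have e1 := key (Sum.inl (0,0,0))
  simp [Fin.sum_univ_succ, A, enc, h₂, cs0, cs1, cs2] at e1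
  have e2 := key (Sum.inl (0,0,1))
  simp [Fin.sum_univ_succ, A, enc, h₂, cs0, cs1, cs2] at e2
  have e3 := key (Sum.inl (0,1,0))
  simp [Fin.sum_univ_succ, A, enc, h₂, cs0, cs1, cs2] at e3
  have e4 := key (Sum.inl (0,1,1))
  simp [Fin.sum_univ_succ, A, enc, h₂, cs0, cs1, cs2] at e4
  have e5 := key (Sum.inl (1,0,0))
  simp [Fin.sum_univ_succ, A, enc, h₂, cs0, cs1, cs2] at e5
  have e6 := key (Sum.inl (1,0,1))
  simp [Fin.sum_univ_succ, A, enc, h₂, cs0, cs1, cs2] at e6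
  have e7 := key (Sum.inl (1,1,0))
  simp [Fin.sum_univ_succ, A, enc, h₂, cs0, cs1, cs2] at e7
  have e8 := key (Sum.inl (1,1,1))
  simp [Fin.sum_univ_succ, A, enc, h₂, cs0, cs1, cs2] at e8
  have e9 := key (Sum.inr (0,1,1))
  simp [Fin.sum_univ_succ, A, enc, h₂, cs0, cs1, cs2] at e9
  have e10 := key (Sum.inr (1,1,1))
  simp [Fin.sum_univ_succ, A, enc, h₂, cs0, cs1, cs2] at e10
  have e11 := key (Sum.inr (2,1,1))
  simp [Fin.sum_univ_succ, A, enc, h₂, cs0, cs1, cs2] at e11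
  have e12 := key (Sum.inr (0,0,1))
  simp [Fin.sum_univ_succ, A, enc, h₂, cs0, cs1, cs2] at e12
  norm_num [Fin.succ] at e1 e2 e3 e4 e5 e6 e7 e8 e9 e10 e11 e12
  clear hn key
  have g1 : (0:ℤ) = ↑(n 0) + ↑(n 1) := e1
  have g2 : (1:ℤ) = ↑(n 2) + ↑(n 3) := e2
  have g3 : (1:ℤ) = ↑(n 4) + ↑(n 5) := e3
  have g4 : (0:ℤ) = ↑(n 6) + ↑(n 7) := e4
  have g5 : (1:ℤ) = ↑(n 8) + ↑(n 9) := e5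
  have g6 : (0:ℤ) = ↑(n 10) + ↑(n 11) := e6
  have g7 : (0:ℤ) = ↑(n 12) + ↑(n 13) := e7
  have g8 : (1:ℤ) = ↑(n 14) + ↑(n 15) := e8
  have g9 : (1:ℤ) = ↑(n 9) + (↑(n 11) + (↑(n 13) + ↑(n 15))) := e9
  have g10 : (1:ℤ) = ↑(n 5) + (↑(n 7) + (↑(n 13) + ↑(n 15))) := e10
  have g11 : (1:ℤ) = ↑(n 3) + (↑(n 7) + (↑(n 11) + ↑(n 15))) := e11
  have g12 : (1:ℤ) = ↑(n 1) + (↑(n 3) + (↑(n 5) + ↑(n 7))) := e12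
  clear e1 e2 e3 e4 e5 e6 e7 e8 e9 e10 e11 e12
  omega

theorem h₂_is_hole :
    h₂ ∈ AddSubgroup.closure (Set.range A) ∧ 2 • h₂ ∈ S ∧ h₂ ∉ S := by
  refine ⟨?_, ?_, h₂_not_mem_S⟩
  · have hcomb : h₂ = (A ![0,0,1,1] + A ![0,1,0,1] + A ![0,1,1,0] + A ![1,0,0,0]
        + A ![1,1,1,1]) - A ![0,1,1,1] := by decide
    rw [hcomb]
    have m : ∀ x : K4State, A x ∈ AddSubgroup.closure (Set.range A) :=
      fun x => AddSubgroup.subset_closure ⟨x, rfl⟩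
    exact sub_mem (add_mem (add_mem (add_mem (add_mem (m _) (m _)) (m _)) (m _)) (m _)) (m _)
  · have hcomb : 2 • h₂ = A ![1,0,0,0] + A ![1,0,0,1] + A ![0,1,0,0] + A ![0,1,0,1]
        + A ![0,0,1,0] + A ![0,0,1,1] + A ![1,1,1,0] + A ![1,1,1,1] := by decide
    rw [hcomb]
    have m : ∀ x : K4State, A x ∈ S := fun x => AddSubmonoid.subset_closure ⟨x, rfl⟩
    exact add_mem (add_mem (add_mem (add_mem (add_mem (add_mem (add_mem (m _) (m _)) (m _))
      (m _)) (m _)) (m _)) (m _)) (m _)
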